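/- Fix d ∈ ℕ and m ≥ d. Let G be an Abelian group and P : {0,1}^m → G a multilinear polynomial of degree at most d. Then for any Hamming ball B of radius d in {0,1}^m (centered at an arbitrary point c), there exist integer coefficients α_b for b ∈ B such that P(c) = Σ_{b∈B} α_b · P(b). Moreover P(0^m) can be written as such an integer combination of P over the Hamming ball of radius d around 0^m shifted by any center. -/
import Mathlib


/-- Evaluation of a multilinear polynomial with coefficients `c : Finset (Fin m) → G`
at a Boolean point `a`. -/
def mEval {m : ℕ} {G : Type*} [AddCommGroup G] (c : Finset (Fin m) → G)
    (a : Fin m → Bool) : G :=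
  ∑ I : Finset (Fin m), if ∀ i ∈ I, a i = true then c I else 0

open Finset

private lemma alt_sum_zero {α : Type*} [DecidableEq α] (D J : Finset α)
    (hJ : J ⊆ D) (hne : J ≠ D) :
    ∑ E ∈ D.powerset.filter (fun E => J ⊆ E), (-1 : ℤ) ^ (D \ E).card = 0 := by
  have hstep : ∑ E ∈ D.powerset.filter (fun E => J ⊆ E), (-1 : ℤ) ^ (D \ E).card
      = ∑ F ∈ (D \ J).powerset, (-1 : ℤ) ^ ((D \ J) \ F).card := by
    refine Finset.sum_nbij' (fun E => E \ J) (fun F => F ∪ J) ?_ ?_ ?_ ?_ ?_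
    · intro E hE
      simp only [mem_filter, mem_powerset] at hE
      exact mem_powerset.2 (sdiff_subset_sdiff hE.1 (le_refl J))
    · intro F hF
      simp only [mem_powerset] at hF
      simp only [mem_filter, mem_powerset]
      constructor
      · exact union_subset (hF.trans (sdiff_subset)) hJ
      · exact subset_union_right
    · intro E hE
      simp only [mem_filter, mem_powerset] at hE
      exact sdiff_union_of_subset hE.2
    · intro F hF
      simp only [mem_powerset] at hF
      apply union_sdiff_cancel_right
      exact disjoint_sdiff.symm.mono_left hF
    · intro E hE
      simp only [mem_filter, mem_powerset] at hE
      have hset : (D \ J) \ (E \ J) = D \ E := by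
        ext x
        simp only [Finset.mem_sdiff, not_and, not_not]
        constructor
        · rintro ⟨⟨hxD, hxJ⟩, hx⟩
          exact ⟨hxD, fun hxE => hxJ (hx hxE)⟩
        · rintro ⟨hxD, hxE⟩
          exact ⟨⟨hxD, fun hxJ => hxE (hE.2 hxJ)⟩, fun h => absurd h hxE⟩
      rw [hset]
  rw [hstep]
  have hne' : (D \ J).Nonempty := by
    rw [sdiff_nonempty]
    intro h
    exact hne (Finset.Subset.antisymm hJ h)
  have hfin : ∀ F ∈ (D \ J).powerset,
      (-1 : ℤ) ^ ((D \ J) \ F).card = (-1 : ℤ) ^ (D \ J).card * (-1 : ℤ) ^ F.card := by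
    intro F hF
    rw [mem_powerset] at hF
    have hc : ((D \ J) \ F).card = (D \ J).card - F.card := card_sdiff_of_subset hF
    have hle : F.card ≤ (D \ J).card := card_le_card hF
    rw [hc]
    have : (D \ J).card = ((D \ J).card - F.card) + F.card := (Nat.sub_add_cancel hle).symm
    calc (-1 : ℤ) ^ ((D \ J).card - F.card)
        = (-1 : ℤ) ^ ((D \ J).card - F.card) * ((-1 : ℤ) ^ F.card * (-1 : ℤ) ^ F.card) := by
          rw [← pow_add, Even.neg_one_pow ⟨F.card, rfl⟩, mul_one]
      _ = ((-1 : ℤ) ^ ((D \ J).card - F.card) * (-1 : ℤ) ^ F.card) * (-1 : ℤ) ^ F.card := by ring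
      _ = (-1 : ℤ) ^ (D \ J).card * (-1 : ℤ) ^ F.card := by rw [← pow_add, ← this]
  rw [Finset.sum_congr rfl hfin, ← Finset.mul_sum,
    Finset.sum_powerset_neg_one_pow_card_of_nonempty hne', mul_zero]

private lemma vanish {m d : ℕ} {G : Type*} [AddCommGroup G] (c : Finset (Fin m) → G)
    (hdeg : ∀ I, c I ≠ 0 → I.card ≤ d) (a : Fin m → Bool) (D : Finset (Fin m))
    (hD : D.card = d + 1) :
    ∑ E ∈ D.powerset, (-1 : ℤ) ^ (D \ E).card •
      mEval c (fun i => if i ∈ D then decide (i ∈ E) else a i) = 0 := by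
  unfold mEval
  simp_rw [Finset.smul_sum]
  rw [Finset.sum_comm]
  apply Finset.sum_eq_zero
  intro I _
  by_cases hc : c I = 0
  · apply Finset.sum_eq_zero
    intro E _
    rw [hc]
    simp
  · have hI : I.card ≤ d := hdeg I hc
    have hcond : ∀ E ∈ D.powerset,
        ((∀ i ∈ I, (if i ∈ D then decide (i ∈ E) else a i) = true) ↔
          (I ∩ D ⊆ E ∧ ∀ i ∈ I, i ∉ D → a i = true)) := by
      intro E _
      constructor
      · intro h
        constructor
        · intro i hi
          rw [mem_inter] at hi
          have := h i hi.1
          rw [if_pos hi.2] at this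
          exact of_decide_eq_true this
        · intro i hi hiD
          have := h i hi
          rwa [if_neg hiD] at this
      · rintro ⟨h1, h2⟩ i hi
        by_cases hiD : i ∈ D
        · rw [if_pos hiD]
          exact decide_eq_true (h1 (mem_inter.2 ⟨hi, hiD⟩))
        · rw [if_neg hiD]
          exact h2 i hi hiD
    by_cases h2 : ∀ i ∈ I, i ∉ D → a i = true
    · have hterm : ∀ E ∈ D.powerset,
          (-1 : ℤ) ^ (D \ E).card •
            (if (∀ i ∈ I, (if i ∈ D then decide (i ∈ E) else a i) = true) then c I else 0)
          = if I ∩ D ⊆ E then (-1 : ℤ) ^ (D \ E).card • c I else 0 := by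
        intro E hE
        rw [if_congr (hcond E hE) rfl rfl, if_congr (and_iff_left h2) rfl rfl]
        split
        · rfl
        · exact smul_zero _
      rw [Finset.sum_congr rfl hterm, ← Finset.sum_filter, ← Finset.sum_smul]
      have hJD : I ∩ D ⊆ D := inter_subset_right
      have hJne : I ∩ D ≠ D := by
        intro h
        have : (I ∩ D).card ≤ d := le_trans (card_le_card inter_subset_left) hI
        rw [h, hD] at this
        omega
      rw [alt_sum_zero D (I ∩ D) hJD hJne, zero_smul]
    · apply Finset.sum_eq_zero
      intro E hE
      rw [if_neg, smul_zero]
      intro h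
      exact h2 ((hcond E hE).1 h).2

private lemma key {m d : ℕ} {G : Type*} [AddCommGroup G] (c : Finset (Fin m) → G)
    (hdeg : ∀ I, c I ≠ 0 → I.card ≤ d) (ctr : Fin m → Bool) :
    ∀ n (a : Fin m → Bool), hammingDist a ctr ≤ n →
      mEval c a ∈ Submodule.span ℤ
        (Set.range fun b : {b : Fin m → Bool // hammingDist b ctr ≤ d} => mEval c b.1) := by
  intro n
  induction n with
  | zero =>
    intro a ha
    exact Submodule.subset_span ⟨⟨a, le_trans ha (Nat.zero_le d)⟩, rfl⟩
  | succ n ih =>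
    intro a ha
    by_cases hball : hammingDist a ctr ≤ d
    · exact Submodule.subset_span ⟨⟨a, hball⟩, rfl⟩
    · push_neg at hball
      have hdist : hammingDist a ctr = ({i | a i ≠ ctr i} : Finset (Fin m)).card := rfl
      obtain ⟨D, hDsub, hDcard⟩ := Finset.exists_subset_card_eq
        (show d + 1 ≤ ({i | a i ≠ ctr i} : Finset (Fin m)).card by omega)
      have hv := vanish c hdeg a D hDcard
      set E0 : Finset (Fin m) := D.filter (fun i => a i = true) with hE0def
      have hE0 : E0 ∈ D.powerset := mem_powerset.2 (filter_subset _ _)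
      have hov0 : (fun i => if i ∈ D then decide (i ∈ E0) else a i) = a := by
        funext i
        by_cases hiD : i ∈ D
        · rw [if_pos hiD]
          simp only [hE0def, mem_filter, hiD, true_and]
          cases a i <;> simp
        · rw [if_neg hiD]
      rw [← Finset.add_sum_erase _ _ hE0, hov0] at hv
      set k := (D \ E0).card with hk
      have hsq : ((-1 : ℤ) ^ k) * ((-1 : ℤ) ^ k) = 1 := by
        rw [← pow_add]; exact Even.neg_one_pow ⟨k, rfl⟩
      have hPa : mEval c a = -∑ E ∈ (D.powerset).erase E0,
          ((-1 : ℤ) ^ k * (-1 : ℤ) ^ (D \ E).card) •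
            mEval c (fun i => if i ∈ D then decide (i ∈ E) else a i) := by
        have h1 : (-1 : ℤ) ^ k • mEval c a
            = -∑ E ∈ (D.powerset).erase E0, (-1 : ℤ) ^ (D \ E).card •
                mEval c (fun i => if i ∈ D then decide (i ∈ E) else a i) :=
          eq_neg_of_add_eq_zero_left hv
        calc mEval c a = ((-1 : ℤ) ^ k * (-1 : ℤ) ^ k) • mEval c a := by rw [hsq, one_smul]
          _ = (-1 : ℤ) ^ k • ((-1 : ℤ) ^ k • mEval c a) := by rw [smul_smul]
          _ = (-1 : ℤ) ^ k • (-∑ E ∈ (D.powerset).erase E0, (-1 : ℤ) ^ (D \ E).card •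
                mEval c (fun i => if i ∈ D then decide (i ∈ E) else a i)) := by rw [h1]
          _ = _ := by
                rw [smul_neg, Finset.smul_sum]
                congr 1
                apply Finset.sum_congr rfl
                intro E _
                rw [smul_smul]
      rw [hPa]
      apply Submodule.neg_mem
      apply Submodule.sum_mem
      intro E hE
      apply Submodule.smul_mem
      rw [mem_erase, mem_powerset] at hE
      obtain ⟨hEne, hED⟩ := hE
      -- find a coordinate where E and E0 differ
      have hex : ∃ i0 ∈ D, ¬((i0 ∈ E) ↔ (i0 ∈ E0)) := by
        by_contra hcon
        push_neg at hcon
        apply hEne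
        ext i
        by_cases hiD : i ∈ D
        · exact hcon i hiD
        · constructor
          · intro h; exact absurd (hED h) hiD
          · intro h; exact absurd ((filter_subset _ _) h) hiD
      obtain ⟨i0, hi0D, hdiff⟩ := hex
      have hne' : a i0 ≠ ctr i0 := by
        have := hDsub hi0D
        simpa using this
      have hov_i0 : (if i0 ∈ D then decide (i0 ∈ E) else a i0) = ctr i0 := by
        rw [if_pos hi0D]
        by_cases hiE0 : i0 ∈ E0
        · have haT : a i0 = true := (mem_filter.1 hiE0).2
          have hiE : i0 ∉ E := fun h => hdiff ⟨fun _ => hiE0, fun _ => h⟩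
          have hcF : ctr i0 = false := by
            cases h : ctr i0
            · rfl
            · exact absurd (haT.trans h.symm) hne'
          simp [hiE, hcF]
        · have haF : a i0 = false := by
            cases h : a i0
            · rfl
            · exact absurd (mem_filter.2 ⟨hi0D, h⟩) hiE0
          have hiE : i0 ∈ E := by
            by_contra h
            exact hdiff ⟨fun hh => absurd hh h, fun hh => absurd hh hiE0⟩
          have hcT : ctr i0 = true := by
            cases h : ctr i0
            · exact absurd (haF.trans h.symm) hne'
            · rfl
          simp [hiE, hcT]
      -- distance bound
      apply ih
      have hsub : ({i | (if i ∈ D then decide (i ∈ E) else a i) ≠ ctr i} : Finset (Fin m)) ⊆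
          (({i | a i ≠ ctr i} : Finset (Fin m)) \ D) ∪ (D.erase i0) := by
        intro j hj
        rw [Finset.mem_filter] at hj
        obtain ⟨-, hj⟩ := hj
        rw [mem_union, mem_sdiff, mem_erase]
        by_cases hjD : j ∈ D
        · right
          refine ⟨?_, hjD⟩
          intro h
          subst h
          exact hj hov_i0
        · left
          rw [if_neg hjD] at hj
          exact ⟨Finset.mem_filter.2 ⟨mem_univ _, hj⟩, hjD⟩
      have hcard1 : (({i | a i ≠ ctr i} : Finset (Fin m)) \ D).card
          = hammingDist a ctr - (d + 1) := by
        rw [card_sdiff_of_subset hDsub, hDcard, hdist]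
      have hcard2 : (D.erase i0).card = d := by
        rw [card_erase_of_mem hi0D, hDcard]
        omega
      have hle := card_le_card hsub
      have hle2 := le_trans hle (card_union_le _ _)
      rw [hcard1, hcard2] at hle2
      have : hammingDist (fun i => if i ∈ D then decide (i ∈ E) else a i) ctr ≤
          hammingDist a ctr - (d + 1) + d := hle2
      omega

private lemma extract {m d : ℕ} {G : Type*} [AddCommGroup G] (c : Finset (Fin m) → G)
    (ctr : Fin m → Bool) (x : G)
    (hx : x ∈ Submodule.span ℤ
      (Set.range fun b : {b : Fin m → Bool // hammingDist b ctr ≤ d} => mEval c b.1)) :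
    ∃ α : (Fin m → Bool) → ℤ,
      x = ∑ b ∈ Finset.univ.filter (fun b : Fin m → Bool => hammingDist b ctr ≤ d),
        α b • mEval c b := by
  obtain ⟨γ, hγ⟩ := (Submodule.mem_span_range_iff_exists_fun ℤ).1 hx
  refine ⟨fun b => if h : hammingDist b ctr ≤ d then γ ⟨b, h⟩ else 0, ?_⟩
  rw [Finset.sum_subtype (p := fun b : Fin m → Bool => hammingDist b ctr ≤ d)
    _ (fun b => by simp) (fun b => (if h : hammingDist b ctr ≤ d then γ ⟨b, h⟩ else 0) • mEval c b)]
  rw [← hγ]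
  apply Finset.sum_congr rfl
  intro b _
  rw [dif_pos b.2]

/-- A degree-`d` polynomial can be interpolated (with integer coefficients) from its
values on any Hamming ball of radius `d`: both its value at the center `ctr` and its
value at `0^m` are integer combinations of its values on the ball around `ctr`. -/
theorem stmt_3 (d m : ℕ) (hdm : d ≤ m) (G : Type*) [AddCommGroup G]
    (c : Finset (Fin m) → G) (hdeg : ∀ I, c I ≠ 0 → I.card ≤ d)
    (ctr : Fin m → Bool) :
    (∃ α : (Fin m → Bool) → ℤ,
      mEval c ctr =
        ∑ b ∈ Finset.univ.filter (fun b : Fin m → Bool => hammingDist b ctr ≤ d),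
          α b • mEval c b) ∧
    (∃ β : (Fin m → Bool) → ℤ,
      mEval c (fun _ => false) =
        ∑ b ∈ Finset.univ.filter (fun b : Fin m → Bool => hammingDist b ctr ≤ d),
          β b • mEval c b) := by
  constructor
  · exact extract c ctr _ (key c hdeg ctr (hammingDist ctr ctr) ctr le_rfl)
  · exact extract c ctr _
      (key c hdeg ctr (hammingDist (fun _ => false) ctr) (fun _ => false) le_rfl)
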